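/- arXiv:1506.03963 — 9 statements merged into one kernel-verified Lean document; each statement's English description precedes it below -/
import Mathlib

section
/- Let Σ be an n × n signature matrix in block upper triangular form with square diagonal blocks Σ_{1,1}, …, Σ_{p,p}, such that every entry above the block diagonal in column j is strictly less than every finite entry of the corresponding diagonal block in the same column. If additionally T_k is a maximum value transversal of Σ_{k,k} for each k, then T = ⋃_k T_k is a maximum value transversal of Σ, where the value of a transversal T is ∑_{(i,j)∈T} σ_{ij}. -/
/-- Let `S` be an `n × n` signature matrix in block upper triangular form
(block assignment `b : Fin n → Fin p` monotone, entries strictly below the block diagonal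
`⊥`), such that every entry above the block diagonal in a column `j` is strictly less than
every finite entry of the corresponding diagonal block in the same column.  If `π` is a
block-preserving transversal whose restriction to each diagonal block is a maximum value
transversal of that block, then `π` is a maximum value transversal of `S`, where the value
of a transversal is the sum of its entries. -/
theorem stmt2 (n p : ℕ) (S : Fin n → Fin n → WithBot ℤ) (b : Fin n → Fin p)
    (hmono : Monotone b)
    (hlow : ∀ i j : Fin n, b j < b i → S i j = ⊥)
    (habove : ∀ i j i' : Fin n, b i < b j → b i' = b j → S i' j ≠ ⊥ → S i j < S i' j)
    (π : Equiv.Perm (Fin n))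
    (hblock : ∀ i, b (π i) = b i)
    (hfin : ∀ i, S i (π i) ≠ ⊥)
    (hmax : ∀ τ : Equiv.Perm (Fin n), (∀ i, b (τ i) = b i) → (∀ i, S i (τ i) ≠ ⊥) →
      ∀ k : Fin p,
        ∑ i ∈ Finset.univ.filter (fun i => b i = k), S i (τ i) ≤
          ∑ i ∈ Finset.univ.filter (fun i => b i = k), S i (π i)) :
    ∀ τ : Equiv.Perm (Fin n), (∀ i, S i (τ i) ≠ ⊥) →
      ∑ i, S i (τ i) ≤ ∑ i, S i (π i) := by
  intro τ hτ
  -- each i maps within or above its block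
  have hge : ∀ i, b i ≤ b (τ i) := by
    intro i
    by_contra h
    exact hτ i (hlow i (τ i) (lt_of_not_ge h))
  -- sums of block indices agree since τ is a permutation
  have hsum : ∑ i, (b (τ i)).val = ∑ i, (b i).val := by
    exact Equiv.sum_comp τ (fun i => (b i).val)
  -- pointwise ≤ with equal sums forces equality
  have heq : ∀ i, b (τ i) = b i := by
    have h := (Finset.sum_eq_sum_iff_of_le
      (f := fun i => (b i).val) (g := fun i => (b (τ i)).val)
      (fun i _ => hge i)).mp hsum.symm
    intro i
    exact (Fin.val_injective (h i (Finset.mem_univ i))).symm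
  -- split the sums over blocks
  have key := hmax τ heq hτ
  calc ∑ i, S i (τ i)
      = ∑ k : Fin p, ∑ i ∈ Finset.univ.filter (fun i => b i = k), S i (τ i) :=
        (Finset.sum_fiberwise Finset.univ b (fun i => S i (τ i))).symm
    _ ≤ ∑ k : Fin p, ∑ i ∈ Finset.univ.filter (fun i => b i = k), S i (π i) :=
        Finset.sum_le_sum (fun k _ => key k)
    _ = ∑ i, S i (π i) :=
        Finset.sum_fiberwise Finset.univ b (fun i => S i (π i))
end

section
/- Let A be an n × n 0–1 incidence matrix whose bipartite graph satisfies the strong Hall condition, i.e., |Γ(f)| ≥ |f| + 1 for every nonempty proper subset f of the row set. Then every nonzero entry of A lies on some transversal of A. -/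
/-- If `A` is an `n × n` 0–1 incidence matrix (`n ≥ 2`) whose bipartite graph
satisfies the strong Hall condition (`|Γ(f)| ≥ |f| + 1` for every nonempty proper subset
`f` of the rows), then every nonzero entry of `A` lies on some transversal of `A`
(a permutation `π` with `A i (π i) = 1` for all `i`). -/
theorem stmt6 (n : ℕ) (hn : 2 ≤ n) (A : Fin n → Fin n → Bool)
    (hSH : ∀ f : Finset (Fin n), f.Nonempty → f ≠ Finset.univ →
      f.card + 1 ≤ (Finset.univ.filter (fun j => ∃ i ∈ f, A i j = true)).card) :
    ∀ i j : Fin n, A i j = true →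
      ∃ π : Equiv.Perm (Fin n), π i = j ∧ ∀ k, A k (π k) = true := by
  intro i j hij
  classical
  set t : Fin n → Finset (Fin n) :=
    fun k => if k = i then {j} else Finset.univ.filter (fun l => A k l = true ∧ l ≠ j) with ht
  have hall : ∀ s : Finset (Fin n), s.card ≤ (s.biUnion t).card := by
    intro s
    rcases s.eq_empty_or_nonempty with rfl | hs
    · simp
    by_cases hi : i ∈ s
    · -- use s.erase i
      rcases (s.erase i).eq_empty_or_nonempty with he | he
      · have : s = {i} := by
          apply Finset.eq_singleton_iff_unique_mem.2
          refine ⟨hi, fun x hx => ?_⟩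
          by_contra hne
          exact (Finset.notMem_empty x) (he ▸ Finset.mem_erase.2 ⟨hne, hx⟩)
        subst this
        have hj : j ∈ ({i} : Finset (Fin n)).biUnion t := by
          simp [ht]
        calc ({i} : Finset (Fin n)).card = 1 := Finset.card_singleton i
          _ ≤ _ := Finset.card_pos.2 ⟨j, hj⟩
      · have hne : s.erase i ≠ Finset.univ := by
          intro h
          have : i ∈ s.erase i := h ▸ Finset.mem_univ i
          exact (Finset.notMem_erase i s) this
        have h1 := hSH (s.erase i) he hne
        have hcard : (s.erase i).card + 1 = s.card := by
          rw [Finset.card_erase_of_mem hi]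
          have hpos : 0 < s.card := Finset.card_pos.2 hs
          omega
        have hsub : (Finset.univ.filter (fun l => ∃ k ∈ s.erase i, A k l = true))
            ⊆ s.biUnion t := by
          intro l hl
          rw [Finset.mem_filter] at hl
          obtain ⟨-, k, hk, hAkl⟩ := hl
          by_cases hlj : l = j
          · subst hlj
            exact Finset.mem_biUnion.2 ⟨i, hi, by simp [ht]⟩
          · refine Finset.mem_biUnion.2 ⟨k, Finset.mem_of_mem_erase hk, ?_⟩
            have hki : k ≠ i := (Finset.mem_erase.1 hk).1
            simp [ht, hki, hAkl, hlj]
        calc s.card = (s.erase i).card + 1 := hcard.symm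
          _ ≤ _ := h1
          _ ≤ _ := Finset.card_le_card hsub
    · have hne : s ≠ Finset.univ := fun h => hi (h ▸ Finset.mem_univ i)
      have h1 := hSH s hs hne
      have hsub : (Finset.univ.filter (fun l => ∃ k ∈ s, A k l = true)).erase j
          ⊆ s.biUnion t := by
        intro l hl
        obtain ⟨hlj, hl⟩ := Finset.mem_erase.1 hl
        rw [Finset.mem_filter] at hl
        obtain ⟨-, k, hk, hAkl⟩ := hl
        refine Finset.mem_biUnion.2 ⟨k, hk, ?_⟩
        have hki : k ≠ i := fun h => hi (h ▸ hk)
        simp [ht, hki, hAkl, hlj]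
      have h2 := Finset.card_le_card hsub
      have h3 := Finset.pred_card_le_card_erase
        (s := Finset.univ.filter (fun l => ∃ k ∈ s, A k l = true)) (a := j)
      omega
  obtain ⟨f, hfinj, hf⟩ :=
    (Finset.all_card_le_biUnion_card_iff_exists_injective t).1 hall
  have hbij : Function.Bijective f := Finite.injective_iff_bijective.1 hfinj
  refine ⟨Equiv.ofBijective f hbij, ?_, ?_⟩
  · have := hf i
    simp [ht] at this
    simpa [Equiv.ofBijective] using this
  · intro k
    by_cases hk : k = i
    · subst hk
      have : f k = j := by have := hf k; simpa [ht] using this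
      simpa [Equiv.ofBijective, this] using hij
    · have := hf k
      simp [ht, hk] at this
      simpa [Equiv.ofBijective] using this.1
end

section
/- Let A be an n × n 0–1 matrix with a transversal. If the bipartite graph of A satisfies the strong Hall condition (|Γ(f)| ≥ |f| + 1 for all nonempty proper subsets f of rows), then A is irreducible: there is no pair of permutation matrices P, Q such that PAQ is block upper triangular with more than one diagonal block (equivalently, there is no nonempty proper subset R of rows and subset C of columns with |R| + |C| = n and a_{ij} = 0 for all i ∈ R, j ∈ C). -/
/-- Let `A` be an `n × n` 0–1 matrix (`n ≥ 2`) possessing a transversal.  If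
its bipartite graph satisfies the strong Hall condition (`|Γ(f)| ≥ |f| + 1` for every
nonempty proper subset `f` of rows), then `A` is irreducible: there are no nonempty proper
row subset `R` and column subset `C` with `|R| + |C| = n` and `A i j = 0` for all
`i ∈ R`, `j ∈ C`. -/
theorem stmt8 (n : ℕ) (hn : 2 ≤ n) (A : Fin n → Fin n → Bool)
    (htrans : ∃ π : Equiv.Perm (Fin n), ∀ i, A i (π i) = true)
    (hSH : ∀ f : Finset (Fin n), f.Nonempty → f ≠ Finset.univ →
      f.card + 1 ≤ (Finset.univ.filter (fun j => ∃ i ∈ f, A i j = true)).card) :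
    ¬ ∃ (R C : Finset (Fin n)), R.Nonempty ∧ R ≠ Finset.univ ∧
      R.card + C.card = n ∧ ∀ i ∈ R, ∀ j ∈ C, A i j = false := by
  rintro ⟨R, C, hRne, hRuniv, hcard, hzero⟩
  have hsub : (Finset.univ.filter (fun j => ∃ i ∈ R, A i j = true)) ⊆ Cᶜ := by
    intro j hj
    simp only [Finset.mem_filter] at hj
    obtain ⟨-, i, hiR, hA⟩ := hj
    simp only [Finset.mem_compl]
    intro hjC
    have := hzero i hiR j hjC
    simp [this] at hA
  have h1 := hSH R hRne hRuniv
  have h2 : (Finset.univ.filter (fun j => ∃ i ∈ R, A i j = true)).card ≤ Cᶜ.card :=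
    Finset.card_le_card hsub
  rw [Finset.card_compl, Fintype.card_fin] at h2
  omega
end

section
/- The set of dual-optimal offset pairs of a structurally nonsingular signature matrix is closed under componentwise minimum: if (c, d) and (c', d') are both nonnegative integer vectors satisfying d_j − c_i ≥ σ_{ij} on the sparsity pattern and d_j − c_i = σ_{ij} on a fixed maximum value transversal T (and similarly for (c', d')), then (min(c, c'), min(d, d')) is also such a pair. Consequently, a unique elementwise smallest dual-optimal pair (the canonical offsets) exists. -/
/-- `(c, d)` is a dual-optimal offset pair for `S` with respect to the maximum value
transversal `π`: nonnegative, feasible on the sparsity pattern, tight on `π`. -/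
def DualOpt {n : ℕ} (S : Fin n → Fin n → WithBot ℤ) (π : Equiv.Perm (Fin n))
    (c d : Fin n → ℤ) : Prop :=
  (∀ i, 0 ≤ c i) ∧ (∀ j, 0 ≤ d j) ∧
  (∀ i j : Fin n, S i j ≠ ⊥ → S i j ≤ ((d j - c i : ℤ) : WithBot ℤ)) ∧
  (∀ i, S i (π i) = ((d (π i) - c i : ℤ) : WithBot ℤ))

lemma dualOpt_min {n : ℕ} (S : Fin n → Fin n → WithBot ℤ) (π : Equiv.Perm (Fin n))
    {c d c' d' : Fin n → ℤ} (h : DualOpt S π c d) (h' : DualOpt S π c' d') :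
    DualOpt S π (fun i => min (c i) (c' i)) (fun j => min (d j) (d' j)) := by
  obtain ⟨hc, hd, hf, ht⟩ := h
  obtain ⟨hc', hd', hf', ht'⟩ := h'
  refine ⟨fun i => le_min (hc i) (hc' i), fun j => le_min (hd j) (hd' j), ?_, ?_⟩
  · intro i j hne
    have key : min (d j) (d' j) - min (c i) (c' i)
        = max (min (d j - c i) (d' j - c i)) (min (d j - c' i) (d' j - c' i)) ∨
        min (d j) (d' j) - min (c i) (c' i) ≥ min (d j - c i) (d' j - c i) ∨
        min (d j) (d' j) - min (c i) (c' i) ≥ min (d j - c' i) (d' j - c' i) := by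
      rcases le_total (c i) (c' i) with hle | hle
      · right; left; omega
      · right; right; omega
    have h1 : S i j ≤ ((d j - c i : ℤ) : WithBot ℤ) := hf i j hne
    have h2 : S i j ≤ ((d' j - c' i : ℤ) : WithBot ℤ) := hf' i j hne
    rcases le_total (c i) (c' i) with hle | hle
    · have hval : (min (d j) (d' j) - min (c i) (c' i) : ℤ) ≥ min (d j - c i) (d' j - c' i) := by
        omega
      calc S i j ≤ ((min (d j - c i) (d' j - c' i) : ℤ) : WithBot ℤ) := by
            rcases min_cases (d j - c i) (d' j - c' i) with ⟨he, _⟩ | ⟨he, _⟩ <;>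
              rw [he] <;> assumption
        _ ≤ _ := WithBot.coe_le_coe.mpr hval
    · have hval : (min (d j) (d' j) - min (c i) (c' i) : ℤ) ≥ min (d j - c i) (d' j - c' i) := by
        omega
      calc S i j ≤ ((min (d j - c i) (d' j - c' i) : ℤ) : WithBot ℤ) := by
            rcases min_cases (d j - c i) (d' j - c' i) with ⟨he, _⟩ | ⟨he, _⟩ <;>
              rw [he] <;> assumption
        _ ≤ _ := WithBot.coe_le_coe.mpr hval
  · intro i
    have heq : (d (π i) - c i : ℤ) = d' (π i) - c' i := by
      have := (ht i).symm.trans (ht' i)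
      exact_mod_cast this
    have : (min (d (π i)) (d' (π i)) - min (c i) (c' i) : ℤ) = d (π i) - c i := by omega
    rw [this]
    exact ht i

/-- For a structurally nonsingular signature matrix `S` with a maximum value
transversal `π`, the set of dual-optimal offset pairs is closed under componentwise minimum;
consequently a unique elementwise smallest dual-optimal pair (the canonical offsets) exists. -/
theorem stmt11 (n : ℕ) (S : Fin n → Fin n → WithBot ℤ) (π : Equiv.Perm (Fin n))
    (hT : ∀ i, S i (π i) ≠ ⊥)
    (hMVT : ∀ τ : Equiv.Perm (Fin n), (∀ i, S i (τ i) ≠ ⊥) →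
      ∑ i, S i (τ i) ≤ ∑ i, S i (π i))
    (hex : ∃ c d : Fin n → ℤ, DualOpt S π c d) :
    (∀ c d c' d' : Fin n → ℤ, DualOpt S π c d → DualOpt S π c' d' →
      DualOpt S π (fun i => min (c i) (c' i)) (fun j => min (d j) (d' j))) ∧
    ∃! cd : (Fin n → ℤ) × (Fin n → ℤ), DualOpt S π cd.1 cd.2 ∧
      ∀ c' d' : Fin n → ℤ, DualOpt S π c' d' →
        (∀ i, cd.1 i ≤ c' i) ∧ (∀ j, cd.2 j ≤ d' j) := by
  classical
  refine ⟨fun c d c' d' h h' => dualOpt_min S π h h', ?_⟩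
  -- the set of total sums of dual-optimal pairs
  set A : Set ℤ := {s | ∃ c d : Fin n → ℤ, DualOpt S π c d ∧ s = ∑ i, c i + ∑ j, d j} with hA
  have hAne : ∃ s, s ∈ A := by
    obtain ⟨c, d, h⟩ := hex
    exact ⟨_, c, d, h, rfl⟩
  have hAbdd : ∃ b : ℤ, ∀ s, s ∈ A → b ≤ s := by
    refine ⟨0, ?_⟩
    rintro s ⟨c, d, ⟨hc, hd, -, -⟩, rfl⟩
    have : (0:ℤ) ≤ ∑ i, c i := Finset.sum_nonneg fun i _ => hc i
    have : (0:ℤ) ≤ ∑ j, d j := Finset.sum_nonneg fun j _ => hd j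
    omega
  obtain ⟨s₀, ⟨c₀, d₀, h₀, hs₀⟩, hleast⟩ :=
    Int.exists_least_of_bdd (P := fun s => s ∈ A) hAbdd hAne
  -- minimality of (c₀, d₀)
  have hmin : ∀ c' d' : Fin n → ℤ, DualOpt S π c' d' →
      (∀ i, c₀ i ≤ c' i) ∧ (∀ j, d₀ j ≤ d' j) := by
    intro c' d' h'
    have hm := dualOpt_min S π h₀ h'
    have hmem : (∑ i, min (c₀ i) (c' i) + ∑ j, min (d₀ j) (d' j)) ∈ A :=
      ⟨_, _, hm, rfl⟩
    have hge : s₀ ≤ ∑ i, min (c₀ i) (c' i) + ∑ j, min (d₀ j) (d' j) := hleast _ hmem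
    have hle1 : ∑ i, min (c₀ i) (c' i) ≤ ∑ i, c₀ i :=
      Finset.sum_le_sum fun i _ => min_le_left _ _
    have hle2 : ∑ j, min (d₀ j) (d' j) ≤ ∑ j, d₀ j :=
      Finset.sum_le_sum fun j _ => min_le_left _ _
    have he1 : ∑ i, min (c₀ i) (c' i) = ∑ i, c₀ i := by omega
    have he2 : ∑ j, min (d₀ j) (d' j) = ∑ j, d₀ j := by omega
    constructor
    · intro i
      have := (Finset.sum_eq_sum_iff_of_le (fun i _ => min_le_left (c₀ i) (c' i))).mp
        he1 i (Finset.mem_univ i)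
      omega
    · intro j
      have := (Finset.sum_eq_sum_iff_of_le (fun j _ => min_le_left (d₀ j) (d' j))).mp
        he2 j (Finset.mem_univ j)
      omega
  refine ⟨(c₀, d₀), ⟨h₀, hmin⟩, ?_⟩
  rintro ⟨c₁, d₁⟩ ⟨h₁, hmin₁⟩
  have h12 := hmin₁ c₀ d₀ h₀
  have h21 := hmin c₁ d₁ h₁
  ext x
  · exact le_antisymm (h12.1 x) (h21.1 x)
  · exact le_antisymm (h12.2 x) (h21.2 x)
end

section
/- For an n × n signature matrix Σ in block upper triangular form with structurally nonsingular diagonal blocks, the maximum transversal value of Σ equals the sum of the maximum transversal values of the diagonal blocks, provided that for every column j and every position (i, j) above the block diagonal with σ_{ij} > −∞ one has σ_{ij} ≤ d_j, where d_j is the canonical column offset determined by the diagonal blocks alone. -/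
/-- `(c, d)` are block-diagonal offsets for the signature matrix `S` with block assignment
`b`: nonnegative, dual feasible on the within-block sparsity pattern, and tight on some
block-preserving transversal whose restriction to each block is a maximum value transversal
of that diagonal block. -/
def BlockOffsets {n p : ℕ} (S : Fin n → Fin n → WithBot ℤ) (b : Fin n → Fin p)
    (c d : Fin n → ℤ) : Prop :=
  (∀ i, 0 ≤ c i) ∧ (∀ j, 0 ≤ d j) ∧
  (∀ i j : Fin n, b i = b j → S i j ≠ ⊥ → S i j ≤ ((d j - c i : ℤ) : WithBot ℤ)) ∧
  ∃ π : Equiv.Perm (Fin n), (∀ i, b (π i) = b i) ∧ (∀ i, S i (π i) ≠ ⊥) ∧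
    (∀ k : Fin p, ∀ τ : Equiv.Perm (Fin n), (∀ i, b (τ i) = b i) →
      (∀ i, b i = k → S i (τ i) ≠ ⊥) →
      ∑ i ∈ Finset.univ.filter (fun i => b i = k), S i (τ i) ≤
        ∑ i ∈ Finset.univ.filter (fun i => b i = k), S i (π i)) ∧
    ∀ i, S i (π i) = ((d (π i) - c i : ℤ) : WithBot ℤ)

/-- The canonical (elementwise smallest) block-diagonal offsets. -/
def CanonicalBlockOffsets {n p : ℕ} (S : Fin n → Fin n → WithBot ℤ) (b : Fin n → Fin p)
    (c d : Fin n → ℤ) : Prop :=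
  BlockOffsets S b c d ∧
    ∀ c' d' : Fin n → ℤ, BlockOffsets S b c' d' →
      (∀ i, c i ≤ c' i) ∧ (∀ j, d j ≤ d' j)

/-- For an `n × n` signature matrix `S` in block upper triangular form
(monotone block assignment `b`, entries below the block diagonal `⊥`) with structurally
nonsingular diagonal blocks, if every finite entry `σ i j` strictly above the block diagonal
satisfies `σ i j ≤ d j`, where `(c, d)` are the canonical offsets determined by the diagonal
blocks alone, then the maximum transversal value of `S` equals the sum of the maximum
transversal values of the diagonal blocks: there is a block-preserving transversal `π` that
is simultaneously a maximum value transversal of `S` and of each diagonal block, so that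
`max value of S = ∑ over blocks of the block maxima`. -/
theorem stmt12 (n p : ℕ) (S : Fin n → Fin n → WithBot ℤ) (b : Fin n → Fin p)
    (hmono : Monotone b)
    (hlow : ∀ i j : Fin n, b j < b i → S i j = ⊥)
    (hblocks : ∀ k : Fin p, ∃ τ : Equiv.Perm (Fin n), (∀ i, b (τ i) = b i) ∧
      ∀ i, b i = k → S i (τ i) ≠ ⊥)
    (c d : Fin n → ℤ) (hcd : CanonicalBlockOffsets S b c d)
    (habove : ∀ i j : Fin n, b i < b j → S i j ≠ ⊥ → S i j ≤ ((d j : ℤ) : WithBot ℤ)) :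
    ∃ π : Equiv.Perm (Fin n), (∀ i, b (π i) = b i) ∧ (∀ i, S i (π i) ≠ ⊥) ∧
      (∀ τ : Equiv.Perm (Fin n), (∀ i, S i (τ i) ≠ ⊥) →
        ∑ i, S i (τ i) ≤ ∑ i, S i (π i)) ∧
      (∀ k : Fin p, ∀ τ : Equiv.Perm (Fin n), (∀ i, b (τ i) = b i) →
        (∀ i, b i = k → S i (τ i) ≠ ⊥) →
        ∑ i ∈ Finset.univ.filter (fun i => b i = k), S i (τ i) ≤
          ∑ i ∈ Finset.univ.filter (fun i => b i = k), S i (π i)) ∧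
      ∑ i, S i (π i) =
        ∑ k : Fin p, ∑ i ∈ Finset.univ.filter (fun i => b i = k), S i (π i) := by
  obtain ⟨⟨hc0, hd0, hfeas, π, hπb, hπne, hπmax, hπtight⟩, _⟩ := hcd
  refine ⟨π, hπb, hπne, ?_, hπmax, (Finset.sum_fiberwise _ _ _).symm⟩
  intro τ hτ
  have hble : ∀ i, b i ≤ b (τ i) := by
    intro i
    by_contra h
    push_neg at h
    exact hτ i (hlow i (τ i) h)
  have hsum : ∑ i, ((b i : ℕ)) = ∑ i, ((b (τ i) : ℕ)) :=
    (Equiv.sum_comp τ (fun i => ((b i : ℕ)))).symm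
  have hbeq : ∀ i, b (τ i) = b i := by
    intro i
    have := (Finset.sum_eq_sum_iff_of_le
      (fun i (_ : i ∈ Finset.univ) => Fin.le_iff_val_le_val.mp (hble i))).mp hsum i
      (Finset.mem_univ i)
    exact Fin.ext this.symm
  calc ∑ i, S i (τ i)
      = ∑ k : Fin p, ∑ i ∈ Finset.univ.filter (fun i => b i = k), S i (τ i) :=
        (Finset.sum_fiberwise _ _ _).symm
    _ ≤ ∑ k : Fin p, ∑ i ∈ Finset.univ.filter (fun i => b i = k), S i (π i) :=
        Finset.sum_le_sum fun k _ => hπmax k τ hbeq (fun i _ => hτ i)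
    _ = ∑ i, S i (π i) := Finset.sum_fiberwise _ _ _
end

section
/- For the crane DAE system, the system Jacobian J given in the paper (8 × 8, with rows f_1,…,f_8 and columns x, z, d, r, θ, τ, u_1, u_2 as in equation (9)) has determinant det J = −τ C_3 cos(θ); hence J is nonsingular if and only if τ ≠ 0, C_3 ≠ 0, and cos(θ) ≠ 0. -/
set_option maxHeartbeats 1000000
set_option maxRecDepth 40000

lemma crane_det6 (M₁ J C₃ τ θ r : ℝ) :
    Matrix.det !![0, 0, τ * Real.cos θ, Real.sin θ, 0, 0;
                  0, 0, -(τ * Real.sin θ), Real.cos θ, 0, 0;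
                  M₁, 0, 0, 0, -1, 0;
                  0, J, 0, 0, 0, C₃;
                  1, Real.sin θ, r * Real.cos θ, 0, 0, 0;
                  0, Real.cos θ, -(r * Real.sin θ), 0, 0, 0] = -τ * C₃ * Real.cos θ := by
  have h := Real.sin_sq_add_cos_sq θ
  simp [Matrix.det_succ_row_zero, Fin.sum_univ_succ]
  simp [Fin.succAbove, Fin.lt_def]
  linear_combination (-(τ * C₃ * Real.cos θ)) * h

lemma crane_det7 (M₁ M₂ J C₃ τ θ r : ℝ) :
    Matrix.det !![0, 0, 0, τ * Real.cos θ, Real.sin θ, 0, 0;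
                  M₂, 0, 0, -(τ * Real.sin θ), Real.cos θ, 0, 0;
                  0, M₁, 0, 0, 0, -1, 0;
                  0, 0, J, 0, 0, 0, C₃;
                  0, 1, Real.sin θ, r * Real.cos θ, 0, 0, 0;
                  0, 0, Real.cos θ, -(r * Real.sin θ), 0, 0, 0;
                  1, 0, 0, 0, 0, 0, 0] = -τ * C₃ * Real.cos θ := by
  have hz : (!![0, 0, 0, τ * Real.cos θ, Real.sin θ, 0, 0;
                  M₂, 0, 0, -(τ * Real.sin θ), Real.cos θ, 0, 0;
                  0, M₁, 0, 0, 0, -1, 0;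
                  0, 0, J, 0, 0, 0, C₃;
                  0, 1, Real.sin θ, r * Real.cos θ, 0, 0, 0;
                  0, 0, Real.cos θ, -(r * Real.sin θ), 0, 0, 0;
                  1, 0, 0, 0, 0, 0, 0].submatrix
              (Fin.succAbove 1) Fin.succ).det = 0 := by
    apply Matrix.det_eq_zero_of_row_eq_zero 5
    intro j; fin_cases j <;> rfl
  have h6 : (!![0, 0, 0, τ * Real.cos θ, Real.sin θ, 0, 0;
                M₂, 0, 0, -(τ * Real.sin θ), Real.cos θ, 0, 0;
                0, M₁, 0, 0, 0, -1, 0;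
                0, 0, J, 0, 0, 0, C₃;
                0, 1, Real.sin θ, r * Real.cos θ, 0, 0, 0;
                0, 0, Real.cos θ, -(r * Real.sin θ), 0, 0, 0;
                1, 0, 0, 0, 0, 0, 0].submatrix
            (Fin.succ 2).succ.succ.succ.succAbove Fin.succ) =
      !![0, 0, τ * Real.cos θ, Real.sin θ, 0, 0;
         0, 0, -(τ * Real.sin θ), Real.cos θ, 0, 0;
         M₁, 0, 0, 0, -1, 0;
         0, J, 0, 0, 0, C₃;
         1, Real.sin θ, r * Real.cos θ, 0, 0, 0;
         0, Real.cos θ, -(r * Real.sin θ), 0, 0, 0] := by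
    ext i k; fin_cases i <;> fin_cases k <;> rfl
  rw [Matrix.det_succ_column_zero]
  simp only [Fin.sum_univ_succ, Fin.sum_univ_zero, Matrix.of_apply, Matrix.cons_val_zero,
    Matrix.cons_val_succ, zero_mul, mul_zero, add_zero, zero_add]
  simp [Fin.succAbove, Fin.lt_def, hz, h6, crane_det6]
  norm_num
  rw [show (6 : Fin 7) = (Fin.succ 2).succ.succ.succ from rfl, h6, crane_det6]
  ring

lemma crane_det8 (M₁ M₂ J C₃ τ θ r : ℝ) :
    Matrix.det !![M₂, 0, 0, 0, τ * Real.cos θ, Real.sin θ, 0, 0;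
                   0, M₂, 0, 0, -τ * Real.sin θ, Real.cos θ, 0, 0;
                   0, 0, M₁, 0, 0, 0, -1, 0;
                   0, 0, 0, J, 0, 0, 0, C₃;
                   0, 0, 1, Real.sin θ, r * Real.cos θ, 0, 0, 0;
                   0, 0, 0, Real.cos θ, -r * Real.sin θ, 0, 0, 0;
                   1, 0, 0, 0, 0, 0, 0, 0;
                   0, 1, 0, 0, 0, 0, 0, 0] = -τ * C₃ * Real.cos θ := by
  have hz : (!![M₂, 0, 0, 0, τ * Real.cos θ, Real.sin θ, 0, 0;
                0, M₂, 0, 0, -(τ * Real.sin θ), Real.cos θ, 0, 0;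
                0, 0, M₁, 0, 0, 0, -1, 0;
                0, 0, 0, J, 0, 0, 0, C₃;
                0, 0, 1, Real.sin θ, r * Real.cos θ, 0, 0, 0;
                0, 0, 0, Real.cos θ, -(r * Real.sin θ), 0, 0, 0;
                1, 0, 0, 0, 0, 0, 0, 0;
                0, 1, 0, 0, 0, 0, 0, 0].submatrix
            Fin.succ Fin.succ).det = 0 := by
    apply Matrix.det_eq_zero_of_row_eq_zero 5
    intro j; fin_cases j <;> rfl
  have h7 : (!![M₂, 0, 0, 0, τ * Real.cos θ, Real.sin θ, 0, 0;
                0, M₂, 0, 0, -(τ * Real.sin θ), Real.cos θ, 0, 0;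
                0, 0, M₁, 0, 0, 0, -1, 0;
                0, 0, 0, J, 0, 0, 0, C₃;
                0, 0, 1, Real.sin θ, r * Real.cos θ, 0, 0, 0;
                0, 0, 0, Real.cos θ, -(r * Real.sin θ), 0, 0, 0;
                1, 0, 0, 0, 0, 0, 0, 0;
                0, 1, 0, 0, 0, 0, 0, 0].submatrix
            (Fin.succ 2).succ.succ.succ.succAbove Fin.succ) =
      !![0, 0, 0, τ * Real.cos θ, Real.sin θ, 0, 0;
         M₂, 0, 0, -(τ * Real.sin θ), Real.cos θ, 0, 0;
         0, M₁, 0, 0, 0, -1, 0;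
         0, 0, J, 0, 0, 0, C₃;
         0, 1, Real.sin θ, r * Real.cos θ, 0, 0, 0;
         0, 0, Real.cos θ, -(r * Real.sin θ), 0, 0, 0;
         1, 0, 0, 0, 0, 0, 0] := by
    ext i k; fin_cases i <;> fin_cases k <;> rfl
  rw [Matrix.det_succ_column_zero]
  simp only [Fin.sum_univ_succ, Fin.sum_univ_zero, Matrix.of_apply, Matrix.cons_val_zero,
    Matrix.cons_val_succ, zero_mul, mul_zero, add_zero, zero_add]
  simp [Fin.succAbove, Fin.lt_def, hz, h7, crane_det7]
  norm_num
  rw [show (6 : Fin 8) = (Fin.succ 2).succ.succ.succ from rfl, h7, crane_det7]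
  ring

/-- The 8 × 8 system Jacobian of the crane DAE system (rows `f₁,…,f₈`,
columns `x, z, d, r, θ, τ, u₁, u₂`) has determinant `−τ C₃ cos θ`; hence it is nonsingular
iff `τ ≠ 0`, `C₃ ≠ 0` and `cos θ ≠ 0`. -/
theorem stmt13 (M₁ M₂ J C₁ C₂ C₃ τ θ r : ℝ) :
    (Matrix.det !![M₂, 0, 0, 0, τ * Real.cos θ, Real.sin θ, 0, 0;
                   0, M₂, 0, 0, -τ * Real.sin θ, Real.cos θ, 0, 0;
                   0, 0, M₁, 0, 0, 0, -1, 0;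
                   0, 0, 0, J, 0, 0, 0, C₃;
                   0, 0, 1, Real.sin θ, r * Real.cos θ, 0, 0, 0;
                   0, 0, 0, Real.cos θ, -r * Real.sin θ, 0, 0, 0;
                   1, 0, 0, 0, 0, 0, 0, 0;
                   0, 1, 0, 0, 0, 0, 0, 0] = -τ * C₃ * Real.cos θ) ∧
    (Matrix.det !![M₂, 0, 0, 0, τ * Real.cos θ, Real.sin θ, 0, 0;
                   0, M₂, 0, 0, -τ * Real.sin θ, Real.cos θ, 0, 0;
                   0, 0, M₁, 0, 0, 0, -1, 0;
                   0, 0, 0, J, 0, 0, 0, C₃;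
                   0, 0, 1, Real.sin θ, r * Real.cos θ, 0, 0, 0;
                   0, 0, 0, Real.cos θ, -r * Real.sin θ, 0, 0, 0;
                   1, 0, 0, 0, 0, 0, 0, 0;
                   0, 1, 0, 0, 0, 0, 0, 0] ≠ 0 ↔
      τ ≠ 0 ∧ C₃ ≠ 0 ∧ Real.cos θ ≠ 0) := by
  have h := crane_det8 M₁ M₂ J C₃ τ θ r
  refine ⟨h, ?_⟩
  rw [h]
  simp [neg_mul, mul_ne_zero_iff, and_assoc, neg_eq_zero]
end

section
/- Let A be an n × n 0–1 matrix whose bipartite graph is connected and in which every 1-entry lies on some transversal, with n ≥ 2. Then A satisfies the strong Hall condition: |Γ(f)| ≥ |f| + 1 for every nonempty proper subset f of the rows. -/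
/-- Let `A` be an `n × n` 0–1 matrix (`n ≥ 2`) whose bipartite graph (on the
disjoint union of rows and columns, with an edge between row `i` and column `j` iff
`A i j = 1`) is connected, and in which every 1-entry lies on some transversal.  Then `A`
satisfies the strong Hall condition: `|Γ(f)| ≥ |f| + 1` for every nonempty proper subset
`f` of the rows. -/
theorem stmt15 (n : ℕ) (hn : 2 ≤ n) (A : Fin n → Fin n → Bool)
    (hconn : ∀ u v : Fin n ⊕ Fin n,
      Relation.ReflTransGen
        (fun a b =>
          (∃ i j, A i j = true ∧ a = Sum.inl i ∧ b = Sum.inr j) ∨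
          (∃ i j, A i j = true ∧ a = Sum.inr j ∧ b = Sum.inl i)) u v)
    (hcover : ∀ i j : Fin n, A i j = true →
      ∃ π : Equiv.Perm (Fin n), π i = j ∧ ∀ k, A k (π k) = true) :
    ∀ f : Finset (Fin n), f.Nonempty → f ≠ Finset.univ →
      f.card + 1 ≤ (Finset.univ.filter (fun j => ∃ i ∈ f, A i j = true)).card := by
  intro f hf hfne
  by_contra h
  push_neg at h
  set Γ := Finset.univ.filter (fun j => ∃ i ∈ f, A i j = true) with hΓ
  have hΓle : Γ.card ≤ f.card := by omega
  have hmemΓ : ∀ i j, i ∈ f → A i j = true → j ∈ Γ := fun i j hi hij =>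
    Finset.mem_filter.2 ⟨Finset.mem_univ _, i, hi, hij⟩
  have himage : ∀ σ : Equiv.Perm (Fin n), (∀ k, A k (σ k) = true) →
      f.image σ = Γ := by
    intro σ hσ
    apply Finset.eq_of_subset_of_card_le
    · intro j hj; obtain ⟨i, hi, rfl⟩ := Finset.mem_image.1 hj; exact hmemΓ _ _ hi (hσ i)
    · rw [Finset.card_image_of_injective _ σ.injective]; exact hΓle
  have hkey : ∀ i j, A i j = true → j ∈ Γ → i ∈ f := by
    intro i j hij hj
    obtain ⟨σ, hσi, hσ⟩ := hcover i j hij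
    by_contra hi
    rw [← himage σ hσ] at hj
    obtain ⟨i', hi', hσi'⟩ := Finset.mem_image.1 hj
    have : i' = i := σ.injective (hσi'.trans hσi.symm)
    exact hi (this ▸ hi')
  obtain ⟨i₀, hi₀⟩ := hf
  obtain ⟨i₁, hi₁⟩ : ∃ i, i ∉ f := by
    by_contra hc; push_neg at hc; exact hfne (Finset.eq_univ_of_forall hc)
  have hpath := hconn (Sum.inl i₀) (Sum.inl i₁)
  have hinv : ∀ v, Relation.ReflTransGen
        (fun a b =>
          (∃ i j, A i j = true ∧ a = Sum.inl i ∧ b = Sum.inr j) ∨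
          (∃ i j, A i j = true ∧ a = Sum.inr j ∧ b = Sum.inl i)) (Sum.inl i₀) v →
      (match v with | Sum.inl i => i ∈ f | Sum.inr j => j ∈ Γ) := by
    intro v hv
    induction hv with
    | refl => exact hi₀
    | tail _ step ih =>
      rcases step with ⟨i, j, hij, rfl, rfl⟩ | ⟨i, j, hij, rfl, rfl⟩
      · exact hmemΓ _ _ ih hij
      · exact hkey _ _ hij ih
  exact hi₁ (hinv _ hpath)
end

section
/- Let Σ be a structurally nonsingular n × n signature matrix with canonical offsets (c, d). Then for every maximum value transversal T of Σ (not just the one used to compute them), the canonical offsets satisfy d_j − c_i = σ_{ij} for all (i, j) ∈ T; i.e., the canonical offsets are tight on every maximum value transversal. -/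
/-- Let `S` be a structurally nonsingular `n × n` signature matrix with
maximum transversal value witnessed by the maximum value transversal `π₀`, and let `(c, d)`
be its canonical offsets: the elementwise smallest nonnegative dual-feasible pair whose dual
objective `∑ d j − ∑ c i` equals the maximum transversal value.  Then for *every* maximum
value transversal `π` of `S`, the canonical offsets are tight: `d (π i) − c i = σ i (π i)`
for all `i`. -/
theorem stmt17 (n : ℕ) (S : Fin n → Fin n → WithBot ℤ)
    (π₀ : Equiv.Perm (Fin n)) (hπ₀ : ∀ i, S i (π₀ i) ≠ ⊥)
    (hmax₀ : ∀ τ : Equiv.Perm (Fin n), (∀ i, S i (τ i) ≠ ⊥) →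
      ∑ i, S i (τ i) ≤ ∑ i, S i (π₀ i))
    (c d : Fin n → ℤ)
    (hc : ∀ i, 0 ≤ c i) (hd : ∀ j, 0 ≤ d j)
    (hfeas : ∀ i j : Fin n, S i j ≠ ⊥ → S i j ≤ ((d j - c i : ℤ) : WithBot ℤ))
    (hopt : (((∑ j, d j) - (∑ i, c i) : ℤ) : WithBot ℤ) = ∑ i, S i (π₀ i))
    (hmin : ∀ c' d' : Fin n → ℤ, (∀ i, 0 ≤ c' i) → (∀ j, 0 ≤ d' j) →
      (∀ i j : Fin n, S i j ≠ ⊥ → S i j ≤ ((d' j - c' i : ℤ) : WithBot ℤ)) →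
      (((∑ j, d' j) - (∑ i, c' i) : ℤ) : WithBot ℤ) = ∑ i, S i (π₀ i) →
      (∀ i, c i ≤ c' i) ∧ (∀ j, d j ≤ d' j)) :
    ∀ π : Equiv.Perm (Fin n), (∀ i, S i (π i) ≠ ⊥) →
      (∑ i, S i (π i) = ∑ i, S i (π₀ i)) →
      ∀ i, S i (π i) = ((d (π i) - c i : ℤ) : WithBot ℤ) := by
  intro π hπ hsum i
  -- unbot the entries on the transversal π
  set s : Fin n → ℤ := fun i => (S i (π i)).unbot (hπ i) with hs
  have hSs : ∀ i, S i (π i) = (s i : WithBot ℤ) := fun i => (WithBot.coe_unbot _ (hπ i)).symm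
  have hsumcoe : ∑ i, S i (π i) = ((∑ i, s i : ℤ) : WithBot ℤ) := by
    rw [WithBot.coe_sum]
    exact Finset.sum_congr rfl fun i _ => hSs i
  have hperm : ∑ j, d j = ∑ i, d (π i) := (Equiv.sum_comp π d).symm
  have hint : ∑ i, (d (π i) - c i) = ∑ i, s i := by
    have h : (((∑ j, d j) - (∑ i, c i) : ℤ) : WithBot ℤ) = ((∑ i, s i : ℤ) : WithBot ℤ) := by
      rw [hopt, ← hsum, hsumcoe]
    have h2 : ((∑ j, d j) - (∑ i, c i) : ℤ) = ∑ i, s i := by exact_mod_cast h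
    rw [← h2, hperm, Finset.sum_sub_distrib]
  have hle : ∀ i ∈ Finset.univ, s i ≤ d (π i) - c i := by
    intro i _
    have := hfeas i (π i) (hπ i)
    rw [hSs i] at this
    exact_mod_cast this
  have heq : ∀ i ∈ Finset.univ, s i = d (π i) - c i :=
    (Finset.sum_eq_sum_iff_of_le hle).mp hint.symm
  rw [hSs i, heq i (Finset.mem_univ i)]
end

section
/- Let A be an n × n 0–1 matrix with a perfect matching M in its bipartite graph, and form the directed graph G_d(A) on n vertices (one per matched pair) with an arc from vertex k to vertex l (k ≠ l) whenever the column matched at vertex k appears with a 1 in the row matched at vertex l. Then the strongly connected components of G_d(A), ordered in reverse topological order, yield permutations P, Q such that PAQ is block upper triangular with irreducible diagonal blocks; moreover, this block structure (the partition of rows/columns into blocks) is independent of the choice of perfect matching M. -/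
/-- The directed graph `G_d(A)` induced by a perfect matching `π` of the 0–1 matrix `A`:
an arc from the matched pair at `a` to the matched pair at `c` (with `c ≠ a`) whenever the
column `π a` matched at `a` has a 1 in the row `c`. -/
def dmArc {n : ℕ} (A : Fin n → Fin n → Bool) (π : Equiv.Perm (Fin n))
    (a c : Fin n) : Prop :=
  c ≠ a ∧ A c (π a) = true

namespace Stmt18
open Finset
open scoped Classical

variable {n : ℕ} (A : Fin n → Fin n → Bool)

/-- one step of the transfer: `(σ⁻¹ * π) j` reaches `j` in `G_σ`. -/
lemma step1 (π σ : Equiv.Perm (Fin n)) (hπ : ∀ i, A i (π i) = true) (j : Fin n) :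
    Relation.ReflTransGen (dmArc A σ) ((σ⁻¹ * π) j) j := by
  by_cases h : (σ⁻¹ * π) j = j
  · rw [h]
  · refine Relation.ReflTransGen.single ⟨fun hc => h hc.symm, ?_⟩
    have : σ ((σ⁻¹ * π) j) = π j := by simp [Equiv.Perm.mul_apply]
    rw [this]; exact hπ j

lemma step2 (π σ : Equiv.Perm (Fin n)) (hπ : ∀ i, A i (π i) = true) (k : ℕ) (j : Fin n) :
    Relation.ReflTransGen (dmArc A σ) (((σ⁻¹ * π) ^ k) j) j := by
  induction k generalizing j with
  | zero => simpa using Relation.ReflTransGen.refl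
  | succ k ih =>
    have h1 : (((σ⁻¹ * π) ^ (k+1)) j) = ((σ⁻¹ * π) ^ k) ((σ⁻¹ * π) j) := by
      rw [pow_succ, Equiv.Perm.mul_apply]
    rw [h1]
    exact (ih ((σ⁻¹ * π) j)).trans (step1 A π σ hπ j)

lemma step3 (π σ : Equiv.Perm (Fin n)) (hπ : ∀ i, A i (π i) = true) (j : Fin n) :
    Relation.ReflTransGen (dmArc A σ) j ((σ⁻¹ * π) j) := by
  set φ := σ⁻¹ * π with hφ
  have hm : orderOf φ - 1 + 1 = orderOf φ := Nat.succ_pred_eq_of_pos (orderOf_pos φ)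
  have h1 : (φ ^ (orderOf φ - 1)) (φ j) = j := by
    have : (φ ^ (orderOf φ - 1)) (φ j) = (φ ^ (orderOf φ - 1) * φ) j := rfl
    rw [this, ← pow_succ, hm, pow_orderOf_eq_one]; rfl
  have := step2 A π σ hπ (orderOf φ - 1) (φ j)
  rwa [h1] at this

/-- Reachability transfers between matchings. -/
lemma reach_transfer (π σ : Equiv.Perm (Fin n)) (hπ : ∀ i, A i (π i) = true)
    {a c : Fin n} (h : Relation.ReflTransGen (dmArc A π) a c) :
    Relation.ReflTransGen (dmArc A σ) a c := by
  induction h using Relation.ReflTransGen.head_induction_on with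
  | refl => exact Relation.ReflTransGen.refl
  | head harc _ ih =>
    rename_i x z _
    refine Relation.ReflTransGen.trans ?_ ih
    refine (step3 A π σ hπ x).trans ?_
    by_cases hz : z = (σ⁻¹ * π) x
    · rw [hz]
    · refine Relation.ReflTransGen.single ⟨hz, ?_⟩
      have : σ ((σ⁻¹ * π) x) = π x := by simp [Equiv.Perm.mul_apply]
      rw [this]; exact harc.2

/-- first entry of a path into a set. -/
lemma exists_entry {α : Type*} (rel : α → α → Prop) (S : Finset α) {y : α} (hy : y ∈ S) :
    ∀ {x : α}, Relation.ReflTransGen rel x y → x ∉ S →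
    ∃ u v, rel u v ∧ u ∉ S ∧ v ∈ S ∧ Relation.ReflTransGen rel x u := by
  intro x h
  induction h using Relation.ReflTransGen.head_induction_on with
  | refl => intro hx; exact absurd hy hx
  | head harc hrest ih =>
    rename_i a c
    intro ha
    by_cases hc : c ∈ S
    · exact ⟨a, c, harc, ha, hc, Relation.ReflTransGen.refl⟩
    · obtain ⟨u, v, h1, h2, h3, h4⟩ := ih hc
      exact ⟨u, v, h1, h2, h3, Relation.ReflTransGen.head harc h4⟩

variable (π₀ : Equiv.Perm (Fin n))

noncomputable def dset (a : Fin n) : Finset (Fin n) :=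
  univ.filter (fun x => Relation.ReflTransGen (dmArc A π₀) a x)

noncomputable def cls (a : Fin n) : Finset (Fin n) :=
  univ.filter (fun x => Relation.ReflTransGen (dmArc A π₀) a x ∧
    Relation.ReflTransGen (dmArc A π₀) x a)

lemma mem_cls_self (a : Fin n) : a ∈ cls A π₀ a := by
  simp only [cls, mem_filter, mem_univ, true_and]
  exact ⟨Relation.ReflTransGen.refl, Relation.ReflTransGen.refl⟩

noncomputable def mrep (a : Fin n) : Fin n :=
  (cls A π₀ a).min' ⟨a, mem_cls_self A π₀ a⟩

noncomputable def key (a : Fin n) : ℕ :=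
  (n + 1) * (dset A π₀ a).card + (mrep A π₀ a).val

lemma same_iff {a c : Fin n}
    (h1 : Relation.ReflTransGen (dmArc A π₀) a c)
    (h2 : Relation.ReflTransGen (dmArc A π₀) c a) :
    dset A π₀ a = dset A π₀ c ∧ cls A π₀ a = cls A π₀ c := by
  constructor
  · ext x; simp only [dset, mem_filter, mem_univ, true_and]
    exact ⟨fun h => h2.trans h, fun h => h1.trans h⟩
  · ext x; simp only [cls, mem_filter, mem_univ, true_and]
    exact ⟨fun h => ⟨h2.trans h.1, h.2.trans h1⟩, fun h => ⟨h1.trans h.1, h.2.trans h2⟩⟩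

lemma key_eq_of_same {a c : Fin n}
    (h1 : Relation.ReflTransGen (dmArc A π₀) a c)
    (h2 : Relation.ReflTransGen (dmArc A π₀) c a) :
    key A π₀ a = key A π₀ c := by
  obtain ⟨hd, hc⟩ := same_iff A π₀ h1 h2
  unfold key mrep
  rw [hd]
  congr 1
  simp only [hc]

lemma key_lt_of_strict {a c : Fin n}
    (h1 : Relation.ReflTransGen (dmArc A π₀) a c)
    (h2 : ¬ Relation.ReflTransGen (dmArc A π₀) c a) :
    key A π₀ c < key A π₀ a := by
  have hsub : dset A π₀ c ⊆ dset A π₀ a := by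
    intro x hx
    simp only [dset, mem_filter, mem_univ, true_and] at *
    exact h1.trans hx
  have hmem : a ∈ dset A π₀ a := by
    simp only [dset, mem_filter, mem_univ, true_and]; exact Relation.ReflTransGen.refl
  have hnotmem : a ∉ dset A π₀ c := by simp [dset, h2]
  have hcard : (dset A π₀ c).card < (dset A π₀ a).card :=
    Finset.card_lt_card ⟨hsub, fun h => hnotmem (h hmem)⟩
  have hb : (mrep A π₀ c).val < n + 1 := Nat.lt_succ_of_lt (mrep A π₀ c).isLt
  calc key A π₀ c < (n + 1) * ((dset A π₀ c).card + 1) := by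
        unfold key; rw [Nat.mul_add, Nat.mul_one]; omega
    _ ≤ (n + 1) * (dset A π₀ a).card := Nat.mul_le_mul_left _ hcard
    _ ≤ key A π₀ a := Nat.le_add_right _ _

lemma same_of_key_eq {a c : Fin n} (h : key A π₀ a = key A π₀ c) :
    Relation.ReflTransGen (dmArc A π₀) a c ∧ Relation.ReflTransGen (dmArc A π₀) c a := by
  by_contra hn
  -- first: from key equality derive mrep equality
  have hma : (mrep A π₀ a).val = key A π₀ a % (n+1) := by
    unfold key; rw [Nat.mul_add_mod, Nat.mod_eq_of_lt (Nat.lt_succ_of_lt (mrep A π₀ a).isLt)]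
  have hmc : (mrep A π₀ c).val = key A π₀ c % (n+1) := by
    unfold key; rw [Nat.mul_add_mod, Nat.mod_eq_of_lt (Nat.lt_succ_of_lt (mrep A π₀ c).isLt)]
  have hm : mrep A π₀ a = mrep A π₀ c := Fin.ext (by rw [hma, hmc, h])
  -- mrep is in both classes
  have hax : mrep A π₀ a ∈ cls A π₀ a := Finset.min'_mem _ _
  have hcx : mrep A π₀ c ∈ cls A π₀ c := Finset.min'_mem _ _
  rw [← hm] at hcx
  simp only [cls, mem_filter, mem_univ, true_and] at hax hcx
  exact hn ⟨hax.1.trans hcx.2, hcx.1.trans hax.2⟩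

noncomputable def rnk (a : Fin n) : ℕ :=
  (univ.filter (fun x => key A π₀ x < key A π₀ a)).card

lemma rnk_le_of_key_le {a c : Fin n} (h : key A π₀ c ≤ key A π₀ a) :
    rnk A π₀ c ≤ rnk A π₀ a := by
  apply Finset.card_le_card
  intro x hx
  simp only [mem_filter, mem_univ, true_and] at *
  omega

lemma rnk_lt_of_key_lt {a c : Fin n} (h : key A π₀ c < key A π₀ a) :
    rnk A π₀ c < rnk A π₀ a := by
  apply Finset.card_lt_card
  constructor
  · intro x hx
    simp only [mem_filter, mem_univ, true_and] at *
    omega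
  · intro hsub
    have := hsub (by simp only [mem_filter, mem_univ, true_and]; exact h : c ∈ _)
    simp only [mem_filter, mem_univ, true_and] at this
    omega

lemma same_of_rnk_eq {a c : Fin n} (h : rnk A π₀ a = rnk A π₀ c) :
    Relation.ReflTransGen (dmArc A π₀) a c ∧ Relation.ReflTransGen (dmArc A π₀) c a := by
  apply same_of_key_eq
  rcases lt_trichotomy (key A π₀ a) (key A π₀ c) with hlt | heq | hgt
  · exact absurd h (Nat.ne_of_lt (rnk_lt_of_key_lt A π₀ hlt))
  · exact heq
  · exact absurd h.symm (Nat.ne_of_lt (rnk_lt_of_key_lt A π₀ hgt))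

lemma rnk_le_of_reach {a c : Fin n} (h : Relation.ReflTransGen (dmArc A π₀) a c) :
    rnk A π₀ c ≤ rnk A π₀ a := by
  apply rnk_le_of_key_le
  by_cases h2 : Relation.ReflTransGen (dmArc A π₀) c a
  · exact (key_eq_of_same A π₀ h2 h).le
  · exact (key_lt_of_strict A π₀ h h2).le

lemma rnk_eq_of_same {a c : Fin n}
    (h1 : Relation.ReflTransGen (dmArc A π₀) a c)
    (h2 : Relation.ReflTransGen (dmArc A π₀) c a) :
    rnk A π₀ a = rnk A π₀ c := by
  unfold rnk; rw [key_eq_of_same A π₀ h1 h2]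

lemma rnk_lt (a : Fin n) : rnk A π₀ a < n := by
  have : rnk A π₀ a < (univ : Finset (Fin n)).card := by
    apply Finset.card_lt_card
    constructor
    · exact Finset.filter_subset _ _
    · intro hsub
      have := hsub (Finset.mem_univ a)
      simp only [mem_filter, mem_univ, true_and] at this
      omega
  simpa using this

end Stmt18

/-- Let `A` be an `n × n` 0–1 matrix whose bipartite graph has a perfect
matching.  Then there is a partition of the rows (`Prow`) and of the columns (`Pcol`) into
`p` blocks such that, for every perfect matching `π`, the strongly connected components of
the directed graph `G_d(A)` (ordered in reverse topological order) yield permutations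
`ρ, γ` and a monotone block assignment `b` with: the permuted matrix `(i,j) ↦ A (ρ i) (γ j)`
is block upper triangular with a transversal on its diagonal; two indices lie in the same
block iff their matched pairs are in the same strongly connected component of `G_d(A)`;
each diagonal block is irreducible (strong Hall within the block); and the blocks agree with
the fixed partitions `Prow`/`Pcol` — i.e. the block structure is independent of the choice
of perfect matching. -/
theorem stmt18 (n : ℕ) (A : Fin n → Fin n → Bool)
    (hpm : ∃ π : Equiv.Perm (Fin n), ∀ i, A i (π i) = true) :
    ∃ p : ℕ, ∃ Prow Pcol : Fin n → Fin p,
      ∀ π : Equiv.Perm (Fin n), (∀ i, A i (π i) = true) →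
        ∃ ρ γ : Equiv.Perm (Fin n), ∃ b : Fin n → Fin p,
          Monotone b ∧
          (∀ i, Prow (ρ i) = b i) ∧ (∀ j, Pcol (γ j) = b j) ∧
          (∀ i j : Fin n, b j < b i → A (ρ i) (γ j) = false) ∧
          (∀ i, A (ρ i) (γ i) = true) ∧
          (∀ i j : Fin n, b i = b j ↔
            (Relation.ReflTransGen (dmArc A π) (ρ i) (ρ j) ∧
             Relation.ReflTransGen (dmArc A π) (ρ j) (ρ i))) ∧
          (∀ k : Fin p, ∀ f ⊆ Finset.univ.filter (fun i => b i = k), f.Nonempty →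
            f ≠ Finset.univ.filter (fun i => b i = k) →
            f.card + 1 ≤ ((Finset.univ.filter (fun i => b i = k)).filter
              (fun j => ∃ i ∈ f, A (ρ i) (γ j) = true)).card) := by
  classical
  obtain ⟨π₀, hπ₀⟩ := hpm
  refine ⟨n, fun a => ⟨Stmt18.rnk A π₀ a, Stmt18.rnk_lt A π₀ a⟩,
    fun j => ⟨Stmt18.rnk A π₀ (π₀⁻¹ j), Stmt18.rnk_lt A π₀ _⟩, ?_⟩
  intro π hπ
  -- transfer of reachability between the two matchings
  have hT : ∀ a c : Fin n, Relation.ReflTransGen (dmArc A π) a c ↔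
      Relation.ReflTransGen (dmArc A π₀) a c :=
    fun a c => ⟨Stmt18.reach_transfer A π π₀ hπ, Stmt18.reach_transfer A π₀ π hπ₀⟩
  set ρ : Equiv.Perm (Fin n) := Tuple.sort (fun a => Stmt18.rnk A π₀ a) with hρ
  refine ⟨ρ, π * ρ, fun i => ⟨Stmt18.rnk A π₀ (ρ i), Stmt18.rnk_lt A π₀ _⟩,
    ?_, fun i => rfl, ?_, ?_, ?_, ?_, ?_⟩
  · -- Monotone b
    intro i j hij
    have := Tuple.monotone_sort (fun a => Stmt18.rnk A π₀ a) hij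
    exact this
  · -- Pcol
    intro j
    have h1 := Stmt18.step1 A π π₀ hπ (ρ j)
    have h2 := Stmt18.step3 A π π₀ hπ (ρ j)
    have : Stmt18.rnk A π₀ ((π₀⁻¹ * π) (ρ j)) = Stmt18.rnk A π₀ (ρ j) :=
      Stmt18.rnk_eq_of_same A π₀ h1 h2
    exact Fin.ext this
  · -- block upper triangular
    intro i j hlt
    cases hA : A (ρ i) ((π * ρ) j) with
    | false => rfl
    | true =>
      exfalso
      have hne : ρ i ≠ ρ j := by
        intro h
        have : i = j := ρ.injective h
        subst this
        exact lt_irrefl _ hlt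
      have harc : dmArc A π (ρ j) (ρ i) := ⟨hne, hA⟩
      have hreach : Relation.ReflTransGen (dmArc A π₀) (ρ j) (ρ i) :=
        (hT _ _).mp (Relation.ReflTransGen.single harc)
      have := Stmt18.rnk_le_of_reach A π₀ hreach
      have hlt' : Stmt18.rnk A π₀ (ρ j) < Stmt18.rnk A π₀ (ρ i) := hlt
      omega
  · -- diagonal transversal
    intro i
    exact hπ (ρ i)
  · -- same block iff same SCC
    intro i j
    constructor
    · intro h
      have hval : Stmt18.rnk A π₀ (ρ i) = Stmt18.rnk A π₀ (ρ j) := congrArg Fin.val h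
      obtain ⟨h1, h2⟩ := Stmt18.same_of_rnk_eq A π₀ hval
      exact ⟨(hT _ _).mpr h1, (hT _ _).mpr h2⟩
    · intro ⟨h1, h2⟩
      exact Fin.ext (Stmt18.rnk_eq_of_same A π₀ ((hT _ _).mp h1) ((hT _ _).mp h2))
  · -- strong Hall condition within each block
    intro k f hsub hne hneq
    set b : Fin n → Fin n := fun i => ⟨Stmt18.rnk A π₀ (ρ i), Stmt18.rnk_lt A π₀ _⟩ with hb
    set Block := Finset.univ.filter (fun i => b i = k) with hBlock
    have hss : f ⊂ Block := Finset.ssubset_iff_subset_ne.mpr ⟨hsub, hneq⟩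
    obtain ⟨j0, hj0B, hj0f⟩ := Finset.exists_of_ssubset hss
    obtain ⟨i0, hi0⟩ := hne
    have hbk : ∀ x ∈ Block, Stmt18.rnk A π₀ (ρ x) = k.val := by
      intro x hx
      rw [hBlock, Finset.mem_filter] at hx
      exact congrArg Fin.val hx.2
    have hreach : Relation.ReflTransGen (dmArc A π) (ρ j0) (ρ i0) := by
      apply (hT _ _).mpr
      exact (Stmt18.same_of_rnk_eq A π₀ (by rw [hbk j0 hj0B, hbk i0 (hsub hi0)])).1
    set S : Finset (Fin n) := f.image ρ with hS
    have hyS : ρ i0 ∈ S := Finset.mem_image_of_mem _ hi0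
    have hxS : ρ j0 ∉ S := by
      intro h
      obtain ⟨t, ht, hteq⟩ := Finset.mem_image.mp h
      exact hj0f (ρ.injective hteq ▸ ht)
    obtain ⟨u, v, harc, huS, hvS, hxu⟩ :=
      Stmt18.exists_entry (dmArc A π) S hyS hreach hxS
    obtain ⟨i, hif, hvi⟩ := Finset.mem_image.mp hvS
    set j : Fin n := ρ⁻¹ u with hj
    have hju : ρ j = u := ρ.apply_symm_apply u
    have hjf : j ∉ f := by
      intro h
      exact huS (hju ▸ Finset.mem_image_of_mem ρ h)
    -- compute the rank of u
    have h1 : Stmt18.rnk A π₀ u ≤ Stmt18.rnk A π₀ (ρ j0) :=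
      Stmt18.rnk_le_of_reach A π₀ ((hT _ _).mp hxu)
    have h2 : Stmt18.rnk A π₀ v ≤ Stmt18.rnk A π₀ u :=
      Stmt18.rnk_le_of_reach A π₀ ((hT _ _).mp (Relation.ReflTransGen.single harc))
    have hv : Stmt18.rnk A π₀ v = k.val := by rw [← hvi]; exact hbk i (hsub hif)
    have hj0 : Stmt18.rnk A π₀ (ρ j0) = k.val := hbk j0 hj0B
    have hu : Stmt18.rnk A π₀ u = k.val := by omega
    have hbj : b j = k := by
      apply Fin.ext
      show Stmt18.rnk A π₀ (ρ j) = k.val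
      rw [hju]; exact hu
    -- j is a new element of the neighborhood
    set N := Block.filter (fun j => ∃ i ∈ f, A (ρ i) ((π * ρ) j) = true) with hN
    have hjN : j ∈ N := by
      rw [hN, Finset.mem_filter]
      refine ⟨by rw [hBlock, Finset.mem_filter]; exact ⟨Finset.mem_univ _, hbj⟩, i, hif, ?_⟩
      have : (π * ρ) j = π u := by rw [Equiv.Perm.mul_apply, hju]
      rw [this, hvi]
      exact harc.2
    have hfN : f ⊆ N := by
      intro x hx
      rw [hN, Finset.mem_filter]
      exact ⟨hsub hx, x, hx, hπ (ρ x)⟩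
    have hins : insert j f ⊆ N := Finset.insert_subset hjN hfN
    calc f.card + 1 = (insert j f).card := (Finset.card_insert_of_notMem hjf).symm
      _ ≤ N.card := Finset.card_le_card hins
end
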